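/- Let $n\ge 1$ and let $d_n$ be the smallest constant such that $\sum_{k=1}^{n}\big(\frac{1}{k}\sum_{j=1}^{k}a_j\big)^2 \le d_n\sum_{k=1}^{n}a_k^2$ holds for all real numbers $a_1,\dots,a_n$. Then $d_n \ge 4-\frac{16\pi^2}{\ln^2(n+1)}$. -/

import Mathlib

set_option maxHeartbeats 1000000
open Real Finset

/-- `sin x ≥ x - x^3/6` for `x ≥ 0`. -/
lemma sin_ge_sub_cube {x : ℝ} (hx : 0 ≤ x) : x - x ^ 3 / 6 ≤ Real.sin x := by
  have hder : ∀ t : ℝ, HasDerivAt (fun y : ℝ => Real.sin y - y + y ^ 3 / 6)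
      (Real.cos t - 1 + t ^ 2 / 2) t := by
    intro t
    have h1 := ((Real.hasDerivAt_sin t).sub (hasDerivAt_id t)).add
      ((hasDerivAt_pow 3 t).div_const 6)
    refine (h1).congr_deriv ?_; symm
    ring
  have hmono : Monotone (fun y : ℝ => Real.sin y - y + y ^ 3 / 6) := by
    apply monotone_of_deriv_nonneg
    · exact fun t => (hder t).differentiableAt
    · intro t
      rw [(hder t).deriv]
      nlinarith [Real.one_sub_sq_div_two_le_cos (x := t)]
  have h0 := hmono hx
  simp at h0
  linarith

/-- Lipschitz bound for sin. -/
lemma sin_sub_sin_le (a b : ℝ) : |Real.sin a - Real.sin b| ≤ |a - b| := by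
  rw [Real.sin_sub_sin]
  have h1 := Real.abs_sin_le_abs (x := (a - b) / 2)
  have h2 := Real.abs_cos_le_one ((a + b) / 2)
  rw [abs_mul, abs_mul]
  have h3 : |(2:ℝ)| = 2 := by norm_num
  rw [h3]
  have h4 : 2 * |Real.sin ((a - b) / 2)| * |Real.cos ((a + b) / 2)| ≤ 2 * |(a - b) / 2| * 1 := by
    apply mul_le_mul _ h2 (abs_nonneg _) (by positivity)
    apply mul_le_mul_of_nonneg_left h1 (by norm_num)
  rw [abs_div] at h4
  simp at h4
  linarith [h4]

/-- telescoping over Icc 1 n. -/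
lemma tele_Icc (g : ℕ → ℝ) (n : ℕ) : ∑ k ∈ Finset.Icc 1 n, (g k - g (k - 1)) = g n - g 0 := by
  induction n with
  | zero => simp
  | succ m ih =>
    rw [Finset.sum_Icc_succ_top (Nat.le_add_left 1 m), ih]
    simp

lemma tele_Icc' (g : ℕ → ℝ) (n : ℕ) : ∑ k ∈ Finset.Icc 1 n, (g (k + 1) - g k) = g (n + 1) - g 1 := by
  induction n with
  | zero => simp
  | succ m ih =>
    rw [Finset.sum_Icc_succ_top (Nat.le_add_left 1 m), ih]
    ring

/-- sum of k^{-3/2} bound. -/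
lemma sum_rpow_bound (n : ℕ) (hn : 1 ≤ n) :
    ∑ k ∈ Finset.Icc 1 n, Real.sqrt k / (k:ℝ) ^ 2 ≤ 3 - 2 / Real.sqrt n := by
  induction n with
  | zero => omega
  | succ m ih =>
    rcases Nat.eq_or_lt_of_le hn with h1 | h2
    · have hm0 : m = 0 := by omega
      subst hm0
      norm_num
    · have hm : 1 ≤ m := by omega
      rw [Finset.sum_Icc_succ_top (Nat.le_add_left 1 m)]
      have ihm := ih hm
      have hms : (0:ℝ) < Real.sqrt m := Real.sqrt_pos.2 (by positivity)
      have hm1s : (0:ℝ) < Real.sqrt ((m:ℝ)+1) := Real.sqrt_pos.2 (by positivity)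
      have hsq : (Real.sqrt m) ^ 2 = (m:ℝ) := Real.sq_sqrt (by positivity)
      have hsq1 : (Real.sqrt ((m:ℝ)+1)) ^ 2 = ((m:ℝ)+1) := Real.sq_sqrt (by positivity)
      have hle : Real.sqrt m ≤ Real.sqrt ((m:ℝ)+1) := by
        apply Real.sqrt_le_sqrt; linarith
      have key : Real.sqrt ((m:ℝ)+1) / ((m:ℝ)+1) ^ 2 ≤ 2 / Real.sqrt m - 2 / Real.sqrt ((m:ℝ)+1) := by
        rw [div_sub_div _ _ (ne_of_gt hms) (ne_of_gt hm1s), div_le_div_iff₀ (by positivity) (by positivity)]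
        nlinarith [mul_pos hms hm1s, sq_nonneg (Real.sqrt ((m:ℝ)+1) - Real.sqrt m),
          mul_pos (mul_pos hms hm1s) hm1s, mul_le_mul_of_nonneg_left hle (le_of_lt (mul_pos hms hm1s))]
      push_cast
      push_cast at ihm
      linarith

lemma hasDerivAt_fw (w : ℝ) {x : ℝ} (hx : 0 < x) :
    HasDerivAt (fun y : ℝ => Real.sqrt y * Real.sin (w * Real.log y))
      ((Real.sin (w * Real.log x) / 2 + w * Real.cos (w * Real.log x)) / Real.sqrt x) x := by
  have hs : Real.sqrt x ≠ 0 := ne_of_gt (Real.sqrt_pos.2 hx)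
  have hxx : Real.sqrt x * Real.sqrt x = x := Real.mul_self_sqrt hx.le
  have h1 : HasDerivAt Real.sqrt (1 / (2 * Real.sqrt x)) x := Real.hasDerivAt_sqrt hx.ne'
  have h2 : HasDerivAt (fun y : ℝ => w * Real.log y) (w * x⁻¹) x :=
    (Real.hasDerivAt_log hx.ne').const_mul w
  have h3 := h2.sin
  have h4 := h1.mul h3
  refine (h4).congr_deriv ?_; symm
  field_simp
  linear_combination (-2 * w * Real.cos (w * Real.log x)) * hxx

lemma hasDerivAt_Gw (w : ℝ) (hw : w ≠ 0) (t : ℝ) :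
    HasDerivAt (fun u : ℝ => u / 8 - Real.sin (2 * (w * u)) / (16 * w) + Real.sin (w * u) ^ 2 / 2
      + w ^ 2 * u / 2 + w * Real.sin (2 * (w * u)) / 4)
      ((Real.sin (w * t) / 2 + w * Real.cos (w * t)) ^ 2) t := by
  have hwt : HasDerivAt (fun u : ℝ => w * u) w t := by
    simpa using (hasDerivAt_id t).const_mul w
  have h2wt : HasDerivAt (fun u : ℝ => 2 * (w * u)) (2 * w) t := by
    simpa using hwt.const_mul 2
  have hsin2 := h2wt.sin
  have hsinsq := (hwt.sin).pow 2
  have hmain := ((((((hasDerivAt_id t).div_const 8).sub (hsin2.div_const (16 * w))).add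
    (hsinsq.div_const 2)).add (((hasDerivAt_id t).const_mul (w ^ 2)).div_const 2)).add
    ((hsin2.const_mul w).div_const 4))
  refine (hmain).congr_deriv ?_; symm
  rw [Real.cos_two_mul]
  have hp := Real.sin_sq_add_cos_sq (w * t)
  field_simp
  linear_combination 512 * hp

lemma hasDerivAt_Sw (w : ℝ) (hw : w ≠ 0) (t : ℝ) :
    HasDerivAt (fun u : ℝ => u / 2 - Real.sin (2 * (w * u)) / (4 * w))
      (Real.sin (w * t) ^ 2) t := by
  have hwt : HasDerivAt (fun u : ℝ => w * u) w t := by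
    simpa using (hasDerivAt_id t).const_mul w
  have h2wt : HasDerivAt (fun u : ℝ => 2 * (w * u)) (2 * w) t := by
    simpa using hwt.const_mul 2
  have hsin2 := h2wt.sin
  have hmain := ((hasDerivAt_id t).div_const 2).sub (hsin2.div_const (4 * w))
  refine (hmain).congr_deriv ?_; symm
  rw [Real.cos_two_mul]
  have hp := Real.sin_sq_add_cos_sq (w * t)
  field_simp
  linear_combination 8 * hp



lemma hasDerivAt_Hw (w : ℝ) (hw : w ≠ 0) {x : ℝ} (hx : 0 < x) :
    HasDerivAt (fun y : ℝ => Real.log y / 8 - Real.sin (2 * (w * Real.log y)) / (16 * w)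
      + Real.sin (w * Real.log y) ^ 2 / 2 + w ^ 2 * Real.log y / 2
      + w * Real.sin (2 * (w * Real.log y)) / 4)
      (((Real.sin (w * Real.log x) / 2 + w * Real.cos (w * Real.log x)) / Real.sqrt x) ^ 2) x := by
  have h := (hasDerivAt_Gw w hw (Real.log x)).comp x (Real.hasDerivAt_log hx.ne')
  refine (h).congr_deriv ?_; symm
  rw [div_pow, Real.sq_sqrt hx.le, div_eq_mul_inv]

lemma den_step (w : ℝ) (hw : 0 < w) {v : ℝ} (hv : 1 ≤ v) :
    (Real.sqrt (v+1) * Real.sin (w * Real.log (v+1)) - Real.sqrt v * Real.sin (w * Real.log v)) ^ 2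
      ≤ (Real.log (v+1) / 8 - Real.sin (2 * (w * Real.log (v+1))) / (16 * w)
          + Real.sin (w * Real.log (v+1)) ^ 2 / 2
          + w ^ 2 * Real.log (v+1) / 2 + w * Real.sin (2 * (w * Real.log (v+1))) / 4)
       - (Real.log v / 8 - Real.sin (2 * (w * Real.log v)) / (16 * w)
          + Real.sin (w * Real.log v) ^ 2 / 2
          + w ^ 2 * Real.log v / 2 + w * Real.sin (2 * (w * Real.log v)) / 4) := by
  set F : ℝ → ℝ := fun y => Real.sqrt y * Real.sin (w * Real.log y) with hFdef
  set H : ℝ → ℝ := fun y => Real.log y / 8 - Real.sin (2 * (w * Real.log y)) / (16 * w)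
      + Real.sin (w * Real.log y) ^ 2 / 2 + w ^ 2 * Real.log y / 2
      + w * Real.sin (2 * (w * Real.log y)) / 4 with hHdef
  set Dd : ℝ → ℝ := fun y => (Real.sin (w * Real.log y) / 2 + w * Real.cos (w * Real.log y)) / Real.sqrt y with hDdef
  have hF : ∀ y : ℝ, 0 < y → HasDerivAt F (Dd y) y := fun y hy => hasDerivAt_fw w hy
  have hH : ∀ y : ℝ, 0 < y → HasDerivAt H (Dd y ^ 2) y := fun y hy => hasDerivAt_Hw w hw.ne' hy
  have inner : ∀ x ∈ Set.Icc v (v+1),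
      0 ≤ Dd x ^ 2 * (x - v) + (H x - H v) - 2 * (F x - F v) * Dd x := by
    intro x hx
    obtain ⟨hvx, hx1⟩ := hx
    have hxpos : (0:ℝ) < x := by linarith
    set Θ : ℝ → ℝ := fun u => Dd x ^ 2 * (x - u) + (H x - H u) - 2 * (F x - F u) * Dd x with hΘdef
    have hΘ : ∀ u : ℝ, 0 < u → HasDerivAt Θ (-(Dd x - Dd u) ^ 2) u := by
      intro u hu
      have h1 : HasDerivAt (fun u : ℝ => Dd x ^ 2 * (x - u)) (Dd x ^ 2 * (-1)) u :=
        ((hasDerivAt_id u).const_sub x).const_mul (Dd x ^ 2)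
      have h2 : HasDerivAt (fun u : ℝ => H x - H u) (-(Dd u ^ 2)) u := (hH u hu).const_sub (H x)
      have h3 : HasDerivAt (fun u : ℝ => 2 * (F x - F u) * Dd x) (2 * -Dd u * Dd x) u :=
        (((hF u hu).const_sub (F x)).const_mul 2).mul_const (Dd x)
      refine ((h1.add h2).sub h3).congr_deriv ?_; symm
      ring
    have hanti : AntitoneOn Θ (Set.Icc v x) := by
      apply antitoneOn_of_deriv_nonpos (convex_Icc v x)
      · intro u hu
        exact (hΘ u (by have := hu.1; linarith)).continuousAt.continuousWithinAt
      · rw [interior_Icc]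
        intro u hu
        exact (hΘ u (by have := hu.1; linarith)).differentiableAt.differentiableWithinAt
      · rw [interior_Icc]
        intro u hu
        rw [(hΘ u (by have := hu.1; linarith)).deriv]
        exact neg_nonpos.2 (sq_nonneg _)
    have h0 := hanti (Set.mem_Icc.2 ⟨le_refl v, hvx⟩) (Set.mem_Icc.2 ⟨hvx, le_refl x⟩) hvx
    have hΘx : Θ x = 0 := by simp [hΘdef]
    rw [hΘx] at h0
    simpa [hΘdef] using h0
  set Ψ : ℝ → ℝ := fun x => (H x - H v) * (x - v) - (F x - F v) ^ 2 with hΨdef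
  have hΨ : ∀ x : ℝ, 0 < x → HasDerivAt Ψ
      (Dd x ^ 2 * (x - v) + (H x - H v) - 2 * (F x - F v) * Dd x) x := by
    intro x hx
    have h1 := ((hH x hx).sub_const (H v)).mul ((hasDerivAt_id x).sub_const v)
    have h2 := ((hF x hx).sub_const (F v)).pow 2
    refine (h1.sub h2).congr_deriv ?_; symm
    simp
  have hmono : MonotoneOn Ψ (Set.Icc v (v+1)) := by
    apply monotoneOn_of_deriv_nonneg (convex_Icc v (v+1))
    · intro x hx
      exact (hΨ x (by have := hx.1; linarith)).continuousAt.continuousWithinAt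
    · rw [interior_Icc]
      intro x hx
      exact (hΨ x (by have := hx.1; linarith)).differentiableAt.differentiableWithinAt
    · rw [interior_Icc]
      intro x hx
      rw [(hΨ x (by have := hx.1; linarith)).deriv]
      exact inner x ⟨hx.1.le, hx.2.le⟩
  have h0 := hmono (Set.mem_Icc.2 ⟨le_refl v, by linarith⟩)
    (Set.mem_Icc.2 ⟨by linarith, le_refl (v+1)⟩) (by linarith)
  have hΨv : Ψ v = 0 := by simp [hΨdef]
  rw [hΨv] at h0
  simp only [hΨdef, hFdef, hHdef] at h0
  nlinarith [h0]



lemma num_step (w : ℝ) (hw : 0 < w) {a b m : ℝ} (ha : 0 ≤ a) (hab : a ≤ b) (hbm : b ≤ m) :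
    (b / 2 - Real.sin (2 * (w * b)) / (4 * w)) - (a / 2 - Real.sin (2 * (w * a)) / (4 * w))
      ≤ Real.sin (w * a) ^ 2 * (b - a) + w ^ 2 * m * (b - a) ^ 2 := by
  set Φ : ℝ → ℝ := fun t => (t / 2 - Real.sin (2 * (w * t)) / (4 * w))
      - Real.sin (w * a) ^ 2 * t - w ^ 2 * m * (t - a) ^ 2 with hΦdef
  have hΦ : ∀ t : ℝ, HasDerivAt Φ
      (Real.sin (w * t) ^ 2 - Real.sin (w * a) ^ 2 - w ^ 2 * m * (2 * (t - a))) t := by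
    intro t
    have h1 := hasDerivAt_Sw w hw.ne' t
    have h2 : HasDerivAt (fun t : ℝ => Real.sin (w * a) ^ 2 * t) (Real.sin (w * a) ^ 2) t := by
      simpa using (hasDerivAt_id t).const_mul (Real.sin (w * a) ^ 2)
    have h3 : HasDerivAt (fun t : ℝ => w ^ 2 * m * (t - a) ^ 2) (w ^ 2 * m * (2 * (t - a))) t := by
      have := (((hasDerivAt_id t).sub_const a).pow 2).const_mul (w ^ 2 * m)
      refine (this).congr_deriv ?_; symm
      simp
    exact (h1.sub h2).sub h3
  have hanti : AntitoneOn Φ (Set.Icc a b) := by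
    apply antitoneOn_of_deriv_nonpos (convex_Icc a b)
    · exact fun t _ => (hΦ t).continuousAt.continuousWithinAt
    · rw [interior_Icc]
      exact fun t _ => (hΦ t).differentiableAt.differentiableWithinAt
    · rw [interior_Icc]
      intro u hu
      rw [(hΦ u).deriv]
      have hau : a ≤ u := hu.1.le
      have hum : u ≤ m := by linarith [hu.2]
      have e1 : |Real.sin (w * u) - Real.sin (w * a)| ≤ w * (u - a) := by
        have h := sin_sub_sin_le (w * u) (w * a)
        rwa [show w * u - w * a = w * (u - a) by ring,
          abs_of_nonneg (by nlinarith : (0:ℝ) ≤ w * (u - a))] at h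
      have e2 : |Real.sin (w * u)| ≤ w * m := by
        refine le_trans (Real.abs_sin_le_abs) ?_
        rw [abs_of_nonneg (by nlinarith : (0:ℝ) ≤ w * u)]
        nlinarith
      have e3 : |Real.sin (w * a)| ≤ w * m := by
        refine le_trans (Real.abs_sin_le_abs) ?_
        rw [abs_of_nonneg (by nlinarith : (0:ℝ) ≤ w * a)]
        nlinarith
      have e4 : |Real.sin (w * u) + Real.sin (w * a)| ≤ 2 * (w * m) := by
        calc |Real.sin (w * u) + Real.sin (w * a)| ≤ |Real.sin (w * u)| + |Real.sin (w * a)| :=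
              abs_add_le _ _
          _ ≤ 2 * (w * m) := by linarith
      have e5 : (Real.sin (w * u) - Real.sin (w * a)) * (Real.sin (w * u) + Real.sin (w * a))
          ≤ (w * (u - a)) * (2 * (w * m)) := by
        calc (Real.sin (w * u) - Real.sin (w * a)) * (Real.sin (w * u) + Real.sin (w * a))
            ≤ |(Real.sin (w * u) - Real.sin (w * a)) * (Real.sin (w * u) + Real.sin (w * a))| :=
              le_abs_self _
          _ = |Real.sin (w * u) - Real.sin (w * a)| * |Real.sin (w * u) + Real.sin (w * a)| :=
              abs_mul _ _
          _ ≤ (w * (u - a)) * (2 * (w * m)) := by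
              apply mul_le_mul e1 e4 (abs_nonneg _) (by nlinarith)
      nlinarith [e5]
  have h0 := hanti (Set.mem_Icc.2 ⟨le_refl a, hab⟩) (Set.mem_Icc.2 ⟨hab, le_refl b⟩) hab
  simp only [hΦdef] at h0
  nlinarith [h0]

lemma main_numeric {L w s1 s4 : ℝ} (hL : 7.8 ≤ L) (hw0 : 0 < w)
    (hwe : w * (L + 2) = π)
    (hs1 : s1 ^ 2 ≤ 4 * w ^ 2) (hs40 : 0 ≤ s4) (hs4u : s4 ≤ 4 * w)
    (hs4l : 4 * w - (4 * w) ^ 3 / 6 ≤ s4) :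
    (4 - 16 * π ^ 2 / L ^ 2) * (L / 8 + w ^ 2 * L / 2 + s1 ^ 2 / 2 + s4 / (16 * w) - w * s4 / 4)
      ≤ L / 2 + s4 / (4 * w) - 6 * w ^ 2 := by
  have hpi1 : 3.141592 < π := Real.pi_gt_d6
  have hpi2 : π < 3.15 := Real.pi_lt_d2
  have hL0 : (0:ℝ) < L := by linarith
  have hwu : w ≤ 0.33 := by nlinarith
  have hπ2 : π ^ 2 = w ^ 2 * (L + 2) ^ 2 := by rw [← hwe]; ring
  set D0 : ℝ := L / 8 + w ^ 2 * L / 2 + s1 ^ 2 / 2 + s4 / (16 * w) - w * s4 / 4 with hD0def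
  have hs4c : 0 ≤ s4 / (16 * w) - w * s4 / 4 := by
    rw [show s4 / (16 * w) - w * s4 / 4 = s4 * ((1 - 4 * w ^ 2) / (16 * w)) by field_simp; ring]
    exact mul_nonneg hs40 (div_nonneg (by nlinarith) (by positivity))
  have hD0L : L / 8 ≤ D0 := by
    rw [hD0def]
    nlinarith [sq_nonneg s1, sq_nonneg w, hs4c]
  have hA : L / 2 + s4 / (4 * w) - (4 - 16 * w ^ 2) * D0
      = s4 * (2 * w - 4 * w ^ 3) + 8 * L * w ^ 4 - (2 - 8 * w ^ 2) * s1 ^ 2 := by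
    rw [hD0def]
    field_simp
    ring
  have hcoef : (0:ℝ) ≤ 2 * w - 4 * w ^ 3 := by nlinarith
  have hAge : 8 * L * w ^ 4 - 16 * w ^ 4 / 3
      ≤ s4 * (2 * w - 4 * w ^ 3) + 8 * L * w ^ 4 - (2 - 8 * w ^ 2) * s1 ^ 2 := by
    have h1 := mul_le_mul_of_nonneg_right hs4l hcoef
    have expand : (4 * w - (4 * w) ^ 3 / 6) * (2 * w - 4 * w ^ 3)
        = 8 * w ^ 2 - 16 * w ^ 4 - 64 * w ^ 4 / 3 + 128 * w ^ 6 / 3 := by ring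
    rw [expand] at h1
    have h1' : 8 * w ^ 2 - 16 * w ^ 4 - 64 * w ^ 4 / 3 ≤ s4 * (2 * w - 4 * w ^ 3) := by
      nlinarith [pow_nonneg hw0.le 6]
    have h2 := mul_le_mul_of_nonneg_left hs1 (show (0:ℝ) ≤ 2 - 8 * w ^ 2 by nlinarith)
    have h2' : (2 - 8 * w ^ 2) * s1 ^ 2 ≤ 8 * w ^ 2 - 32 * w ^ 4 := by nlinarith [h2]
    linarith
  have key1 : (4 - 16 * w ^ 2) * D0
      ≤ L / 2 + s4 / (4 * w) - (8 * L * w ^ 4 - 16 * w ^ 4 / 3) := by linarith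
  -- R step
  have hR : 16 * π ^ 2 / L ^ 2 - 16 * w ^ 2 = 64 * w ^ 2 * (L + 1) / L ^ 2 := by
    rw [hπ2]
    field_simp
    ring
  have hR0 : (0:ℝ) ≤ 16 * π ^ 2 / L ^ 2 - 16 * w ^ 2 := by
    rw [hR]; positivity
  have key2 : 8 * w ^ 2 ≤ (16 * π ^ 2 / L ^ 2 - 16 * w ^ 2) * D0 := by
    have h1 : (16 * π ^ 2 / L ^ 2 - 16 * w ^ 2) * (L / 8) ≤ (16 * π ^ 2 / L ^ 2 - 16 * w ^ 2) * D0 :=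
      mul_le_mul_of_nonneg_left hD0L hR0
    have h2 : (16 * π ^ 2 / L ^ 2 - 16 * w ^ 2) * (L / 8) = 8 * w ^ 2 * (L + 1) / L := by
      rw [hR]
      field_simp
      ring
    have h3 : 8 * w ^ 2 ≤ 8 * w ^ 2 * (L + 1) / L := by
      rw [le_div_iff₀ hL0]
      nlinarith
    linarith
  have hsplit : (4 - 16 * π ^ 2 / L ^ 2) * D0
      = (4 - 16 * w ^ 2) * D0 - (16 * π ^ 2 / L ^ 2 - 16 * w ^ 2) * D0 := by ring
  rw [hsplit]
  have hfinal : 8 * w ^ 2 + (8 * L * w ^ 4 - 16 * w ^ 4 / 3) ≥ 6 * w ^ 2 := by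
    nlinarith [pow_pos hw0 4]
  linarith
noncomputable def GGf (w t : ℝ) : ℝ := t/8 - Real.sin (2*(w*t))/(16*w) + Real.sin (w*t)^2/2
  + w^2*t/2 + w*Real.sin (2*(w*t))/4

noncomputable def SRf (w t : ℝ) : ℝ := t/2 - Real.sin (2*(w*t))/(4*w)

noncomputable def FRf (w x : ℝ) : ℝ := Real.sqrt x * Real.sin (w * Real.log x)

lemma den_step_nat (w : ℝ) (hw : 0 < w) (k : ℕ) (hk : 1 ≤ k) :
    (FRf w k - FRf w ((k-1 : ℕ) : ℝ))^2 ≤ GGf w (Real.log k) - GGf w (Real.log ((k-1 : ℕ) : ℝ)) := by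
  rcases eq_or_lt_of_le hk with h1 | h2
  · have : k = 1 := h1.symm
    subst this
    simp [FRf, GGf, Real.log_one]
  · have hk2 : 2 ≤ k := h2
    have hv : (1:ℝ) ≤ ((k-1 : ℕ) : ℝ) := by
      have : 1 ≤ k - 1 := by omega
      exact_mod_cast this
    have hds := den_step w hw hv
    have hcast : ((k-1 : ℕ) : ℝ) + 1 = (k:ℝ) := by
      have : (k - 1) + 1 = k := by omega
      exact_mod_cast this
    rw [hcast] at hds
    simpa [FRf, GGf] using hds

lemma num_step_nat (w : ℝ) (hw : 0 < w) (k : ℕ) (hk : 1 ≤ k) :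
    SRf w (Real.log ((k:ℝ)+1)) - SRf w (Real.log k)
      ≤ Real.sin (w * Real.log k)^2 / k + 2*w^2*(Real.sqrt k / (k:ℝ)^2) := by
  have hk0 : (0:ℝ) < (k:ℝ) := by exact_mod_cast hk
  have hk1r : (1:ℝ) ≤ (k:ℝ) := by exact_mod_cast hk
  have hlogk : 0 ≤ Real.log k := Real.log_nonneg hk1r
  have hle : Real.log (k:ℝ) ≤ Real.log ((k:ℝ)+1) := by
    apply Real.log_le_log hk0; linarith
  have h := num_step w hw hlogk hle (le_refl (Real.log ((k:ℝ)+1)))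
  have hdelta : Real.log ((k:ℝ)+1) - Real.log k ≤ 1 / k := by
    have h2 : Real.log ((k:ℝ)+1) - Real.log k = Real.log (((k:ℝ)+1)/k) := by
      rw [Real.log_div (by linarith) (ne_of_gt hk0)]
    rw [h2]
    have h3 := Real.log_le_sub_one_of_pos (show (0:ℝ) < ((k:ℝ)+1)/k by positivity)
    have heq : ((k:ℝ)+1)/k - 1 = 1/k := by field_simp; ring
    linarith
  have hdelta0 : 0 ≤ Real.log ((k:ℝ)+1) - Real.log k := by linarith
  have hm : Real.log ((k:ℝ)+1) ≤ 2 * Real.sqrt k := by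
    have h1 : Real.log ((k:ℝ)+1) = 2 * Real.log (Real.sqrt ((k:ℝ)+1)) := by
      rw [Real.log_sqrt (by linarith)]; ring
    have h2 : Real.log (Real.sqrt ((k:ℝ)+1)) ≤ Real.sqrt ((k:ℝ)+1) - 1 :=
      Real.log_le_sub_one_of_pos (Real.sqrt_pos.2 (by linarith))
    have h3 : Real.sqrt ((k:ℝ)+1) ≤ Real.sqrt k + 1 := by
      have h4 : ((k:ℝ)+1) ≤ (Real.sqrt k + 1)^2 := by
        nlinarith [Real.sq_sqrt hk0.le, Real.sqrt_nonneg (k:ℝ)]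
      calc Real.sqrt ((k:ℝ)+1) ≤ Real.sqrt ((Real.sqrt k + 1)^2) := Real.sqrt_le_sqrt h4
        _ = Real.sqrt k + 1 := Real.sqrt_sq (by positivity)
    linarith
  have e1 : Real.sin (w * Real.log k)^2 * (Real.log ((k:ℝ)+1) - Real.log k)
      ≤ Real.sin (w * Real.log k)^2 / k := by
    rw [div_eq_mul_inv, ← one_div]
    exact mul_le_mul_of_nonneg_left hdelta (sq_nonneg _)
  have e2 : w^2 * Real.log ((k:ℝ)+1) * (Real.log ((k:ℝ)+1) - Real.log k)^2
      ≤ 2*w^2*(Real.sqrt k / (k:ℝ)^2) := by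
    have hd2 : (Real.log ((k:ℝ)+1) - Real.log k)^2 ≤ 1/(k:ℝ)^2 := by
      have := pow_le_pow_left₀ hdelta0 hdelta 2
      calc (Real.log ((k:ℝ)+1) - Real.log k)^2 ≤ (1/(k:ℝ))^2 := this
        _ = 1/(k:ℝ)^2 := by rw [div_pow]; norm_num
    have hm0 : 0 ≤ Real.log ((k:ℝ)+1) := by linarith
    calc w^2 * Real.log ((k:ℝ)+1) * (Real.log ((k:ℝ)+1) - Real.log k)^2
        ≤ w^2 * (2 * Real.sqrt k) * (1/(k:ℝ)^2) := by
          apply mul_le_mul _ hd2 (sq_nonneg _) (by positivity)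
          exact mul_le_mul_of_nonneg_left hm (sq_nonneg w)
      _ = 2*w^2*(Real.sqrt k / (k:ℝ)^2) := by ring
  calc SRf w (Real.log ((k:ℝ)+1)) - SRf w (Real.log k)
      ≤ Real.sin (w * Real.log k)^2 * (Real.log ((k:ℝ)+1) - Real.log k)
        + w^2 * Real.log ((k:ℝ)+1) * (Real.log ((k:ℝ)+1) - Real.log k)^2 := by
        simpa [SRf] using h
    _ ≤ _ := by linarith

lemma delta_bound (n : ℕ) (hn : 1 ≤ n) (d : ℝ)
    (hd : ∀ a : ℕ → ℝ, ∑ k ∈ Finset.Icc 1 n, ((1 / (k : ℝ)) * ∑ j ∈ Finset.Icc 1 k, a j) ^ 2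
      ≤ d * ∑ k ∈ Finset.Icc 1 n, (a k) ^ 2) :
    ∑ k ∈ Finset.Icc 1 n, ((1:ℝ)/k)^2 ≤ d := by
  have h := hd (fun j => if j = 1 then 1 else 0)
  have h1 : ∀ k ∈ Finset.Icc 1 n,
      ((1 / (k : ℝ)) * ∑ j ∈ Finset.Icc 1 k, (if j = 1 then (1:ℝ) else 0)) ^ 2 = ((1:ℝ)/k)^2 := by
    intro k hk
    rw [Finset.sum_ite_eq' (Finset.Icc 1 k) 1 (fun _ => (1:ℝ)),
      if_pos (Finset.mem_Icc.2 ⟨le_refl 1, (Finset.mem_Icc.1 hk).1⟩), mul_one]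
  rw [Finset.sum_congr rfl h1] at h
  have h2 : ∑ k ∈ Finset.Icc 1 n, (if k = 1 then (1:ℝ) else 0)^2 = 1 := by
    have h3 : ∀ k ∈ Finset.Icc 1 n, ((if k = 1 then (1:ℝ) else 0))^2 = if k = 1 then (1:ℝ) else 0 := by
      intro k _; split <;> norm_num
    rw [Finset.sum_congr rfl h3, Finset.sum_ite_eq' (Finset.Icc 1 n) 1 (fun _ => (1:ℝ)),
      if_pos (Finset.mem_Icc.2 ⟨le_refl 1, hn⟩)]
  rw [h2, mul_one] at h
  exact h

theorem discrete_hardy_lower_bound (n : ℕ) (hn : 1 ≤ n) (d : ℝ)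
    (hd : IsLeast {c : ℝ | ∀ a : ℕ → ℝ,
      ∑ k ∈ Finset.Icc 1 n, ((1 / (k : ℝ)) * ∑ j ∈ Finset.Icc 1 k, a j) ^ 2
        ≤ c * ∑ k ∈ Finset.Icc 1 n, (a k) ^ 2} d) :
    d ≥ 4 - 16 * π ^ 2 / (Real.log (n + 1)) ^ 2 := by
  have hmem : ∀ a : ℕ → ℝ,
      ∑ k ∈ Finset.Icc 1 n, ((1 / (k : ℝ)) * ∑ j ∈ Finset.Icc 1 k, a j) ^ 2
        ≤ d * ∑ k ∈ Finset.Icc 1 n, (a k) ^ 2 := hd.1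
  have hδ := delta_bound n hn d hmem
  have h1d : (1:ℝ) ≤ d := by
    have hone : ((1:ℝ)/((1:ℕ):ℝ))^2 ≤ ∑ k ∈ Finset.Icc 1 n, ((1:ℝ)/k)^2 :=
      Finset.single_le_sum (f := fun k : ℕ => ((1:ℝ)/k)^2) (fun i _ => by positivity)
        (Finset.mem_Icc.2 ⟨le_refl 1, hn⟩)
    rw [show ((1:ℝ)/((1:ℕ):ℝ))^2 = (1:ℝ) by norm_num] at hone
    linarith
  have hpi1 : 3.141592 < π := Real.pi_gt_d6
  have hpi2 : π < 3.15 := Real.pi_lt_d2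
  have hn1 : (1:ℝ) ≤ (n:ℝ) := by exact_mod_cast hn
  have hLpos : 0 < Real.log ((n:ℝ) + 1) := Real.log_pos (by linarith)
  by_cases hcase : Real.log ((n:ℝ) + 1) ≤ 7.8
  · -- trivial branch
    by_cases hA : 3 ≤ 16 * π^2 / (Real.log ((n:ℝ)+1))^2
    · rw [ge_iff_le]; linarith
    · push_neg at hA
      rw [div_lt_iff₀ (by positivity)] at hA
      have hL725 : 7.25 < Real.log ((n:ℝ)+1) := by nlinarith
      have hn4 : 4 ≤ n := by
        by_contra hcon
        push_neg at hcon
        have hn3 : (n:ℝ) ≤ 3 := by exact_mod_cast Nat.lt_succ_iff.1 hcon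
        have := Real.log_le_sub_one_of_pos (show (0:ℝ) < (n:ℝ)+1 by linarith)
        linarith
      have hsub : Finset.Icc 1 4 ⊆ Finset.Icc 1 n := Finset.Icc_subset_Icc_right hn4
      have hsum4 : ∑ k ∈ Finset.Icc (1:ℕ) 4, ((1:ℝ)/(k:ℝ))^2 ≤ ∑ k ∈ Finset.Icc 1 n, ((1:ℝ)/(k:ℝ))^2 :=
        Finset.sum_le_sum_of_subset_of_nonneg hsub (fun i _ _ => by positivity)
      have hval : ∑ k ∈ Finset.Icc (1:ℕ) 4, ((1:ℝ)/(k:ℝ))^2 = 205/144 := by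
        rw [show Finset.Icc (1:ℕ) 4 = {1, 2, 3, 4} by rfl]
        norm_num
      have hTb : 2.59 ≤ 16 * π^2 / (Real.log ((n:ℝ)+1))^2 := by
        rw [le_div_iff₀ (by positivity)]
        nlinarith
      rw [ge_iff_le]
      rw [hval] at hsum4
      have : (205:ℝ)/144 ≤ d := le_trans hsum4 hδ
      linarith
  · -- main branch
    push_neg at hcase
    set L : ℝ := Real.log ((n:ℝ) + 1) with hLdef
    have hL : 7.8 ≤ L := le_of_lt hcase
    set w : ℝ := π / (L + 2) with hwdef
    have hw0 : 0 < w := by rw [hwdef]; positivity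
    have hwe : w * (L + 2) = π := by rw [hwdef]; field_simp
    have hwu : w ≤ 0.33 := by nlinarith
    -- the test sequence
    have hkey := hmem (fun k => FRf w k - FRf w ((k-1 : ℕ) : ℝ))
    have hF0 : FRf w ((0:ℕ):ℝ) = 0 := by simp [FRf]
    have hpartial : ∀ k : ℕ, ∑ j ∈ Finset.Icc 1 k, (FRf w j - FRf w ((j-1 : ℕ) : ℝ)) = FRf w k := by
      intro k
      have := tele_Icc (fun j : ℕ => FRf w j) k
      rw [this, hF0, sub_zero]
    -- numerator = sum of sin^2/k
    have hNUM : ∑ k ∈ Finset.Icc 1 n,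
        ((1 / (k : ℝ)) * ∑ j ∈ Finset.Icc 1 k, (FRf w j - FRf w ((j-1 : ℕ) : ℝ))) ^ 2
        = ∑ k ∈ Finset.Icc 1 n, Real.sin (w * Real.log k)^2 / k := by
      apply Finset.sum_congr rfl
      intro k hk
      have hk1 : 1 ≤ k := (Finset.mem_Icc.1 hk).1
      have hk0 : (0:ℝ) < (k:ℝ) := by exact_mod_cast hk1
      rw [hpartial k]
      have hsq : Real.sqrt k ^ 2 = (k:ℝ) := Real.sq_sqrt hk0.le
      rw [FRf, mul_pow, mul_pow, hsq]
      field_simp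
    rw [hNUM] at hkey
    -- numerator lower bound
    have hNtel : ∑ k ∈ Finset.Icc 1 n,
        (SRf w (Real.log ((k:ℝ)+1)) - SRf w (Real.log k)) = SRf w L := by
      have h := tele_Icc' (fun k : ℕ => SRf w (Real.log k)) n
      push_cast at h
      rw [h]
      have h1 : SRf w (Real.log 1) = 0 := by simp [SRf, Real.log_one]
      rw [h1, sub_zero, hLdef]
    have hNlow : SRf w L - 6*w^2 ≤ ∑ k ∈ Finset.Icc 1 n, Real.sin (w * Real.log k)^2 / k := by
      have hsum := Finset.sum_le_sum (s := Finset.Icc 1 n)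
        (f := fun k : ℕ => SRf w (Real.log ((k:ℝ)+1)) - SRf w (Real.log k))
        (g := fun k : ℕ => Real.sin (w * Real.log k)^2 / k + 2*w^2*(Real.sqrt k / (k:ℝ)^2))
        (fun k hk => num_step_nat w hw0 k (Finset.mem_Icc.1 hk).1)
      rw [hNtel] at hsum
      rw [Finset.sum_add_distrib] at hsum
      have hrb := sum_rpow_bound n hn
      have hsn : 0 < Real.sqrt (n:ℝ) := Real.sqrt_pos.2 (by linarith)
      have h2 : ∑ k ∈ Finset.Icc 1 n, 2*w^2*(Real.sqrt k / (k:ℝ)^2) ≤ 6*w^2 := by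
        rw [← Finset.mul_sum]
        have h3 : ∑ k ∈ Finset.Icc 1 n, Real.sqrt k / (k:ℝ)^2 ≤ 3 := by
          have : 0 < 2 / Real.sqrt (n:ℝ) := by positivity
          linarith
        nlinarith [sq_nonneg w]
      linarith
    -- denominator upper bound
    have hden : ∀ k ∈ Finset.Icc 1 n, (FRf w k - FRf w ((k-1 : ℕ) : ℝ))^2
        ≤ GGf w (Real.log k) - GGf w (Real.log ((k-1 : ℕ) : ℝ)) := fun k hk =>
      den_step_nat w hw0 k (Finset.mem_Icc.1 hk).1
    have hDtel : ∑ k ∈ Finset.Icc 1 n,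
        (GGf w (Real.log k) - GGf w (Real.log ((k-1 : ℕ) : ℝ))) = GGf w (Real.log n) := by
      have h := tele_Icc (fun k : ℕ => GGf w (Real.log k)) n
      rw [h]
      have h0 : GGf w (Real.log ((0:ℕ):ℝ)) = 0 := by
        simp [GGf, Real.log_zero]
      rw [h0, sub_zero]
    have hDle : ∑ k ∈ Finset.Icc 1 n, (FRf w k - FRf w ((k-1 : ℕ) : ℝ))^2 ≤ GGf w (Real.log n) := by
      rw [← hDtel]
      exact Finset.sum_le_sum hden
    -- G monotone
    have hGmono : GGf w (Real.log n) ≤ GGf w L := by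
      have hG' : ∀ t : ℝ, HasDerivAt (fun u => GGf w u)
          ((Real.sin (w*t)/2 + w*Real.cos (w*t))^2) t := fun t => hasDerivAt_Gw w hw0.ne' t
      have hmono : Monotone (fun t => GGf w t) := by
        apply monotone_of_deriv_nonneg
        · intro t
          exact (hG' t).differentiableAt
        · intro t
          rw [(hG' t).deriv]
          positivity
      apply hmono
      rw [hLdef]
      exact Real.log_le_log (by linarith) (by linarith)
    -- trig values
    have hwL : w * L = π - 2*w := by nlinarith [hwe]
    have hs2L : Real.sin (2*(w*L)) = - Real.sin (4*w) := by
      rw [hwL, show 2*(π - 2*w) = 2*π - 4*w by ring, Real.sin_sub]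
      simp [Real.sin_two_pi, Real.cos_two_pi]
    have hs1L : Real.sin (w*L) = Real.sin (2*w) := by rw [hwL, Real.sin_pi_sub]
    have hSL : SRf w L = L/2 + Real.sin (4*w)/(4*w) := by
      rw [SRf, hs2L]; ring
    have hGL : GGf w L = L/8 + w^2*L/2 + Real.sin (2*w)^2/2 + Real.sin (4*w)/(16*w)
        - w*Real.sin (4*w)/4 := by
      rw [GGf, hs2L, hs1L]; ring
    -- sin bounds
    have h4wpi : 4*w ≤ π := by nlinarith
    have hs40 : 0 ≤ Real.sin (4*w) := Real.sin_nonneg_of_nonneg_of_le_pi (by positivity) h4wpi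
    have hs4u : Real.sin (4*w) ≤ 4*w := le_of_lt (Real.sin_lt (by positivity))
    have hs4l : 4*w - (4*w)^3/6 ≤ Real.sin (4*w) := _root_.sin_ge_sub_cube (by positivity)
    have hs1sq : Real.sin (2*w)^2 ≤ 4*w^2 := by nlinarith [Real.sin_sq_le_sq (x := 2*w)]
    have hmn := main_numeric hL hw0 hwe hs1sq hs40 hs4u hs4l
    -- final assembly
    have hT0 : 0 ≤ 4 - 16*π^2/L^2 := by
      have h1 : 16*π^2/L^2 ≤ 3 := by
        rw [div_le_iff₀ (by positivity)]
        nlinarith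
      linarith
    have hNpos : 0 < L/2 + Real.sin (4*w)/(4*w) - 6*w^2 := by
      have h1 : 0 ≤ Real.sin (4*w)/(4*w) := by positivity
      nlinarith
    have hNlow' : L/2 + Real.sin (4*w)/(4*w) - 6*w^2
        ≤ ∑ k ∈ Finset.Icc 1 n, Real.sin (w * Real.log k)^2 / k := by
      rw [← hSL]; linarith
    have hDpos : 0 < ∑ k ∈ Finset.Icc 1 n, (FRf w k - FRf w ((k-1 : ℕ) : ℝ))^2 := by
      by_contra hcon
      push_neg at hcon
      have h1 : d * ∑ k ∈ Finset.Icc 1 n, (FRf w k - FRf w ((k-1 : ℕ) : ℝ))^2 ≤ 0 :=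
        mul_nonpos_of_nonneg_of_nonpos (by linarith) hcon
      linarith [hkey, hNlow']
    have hchain : (4 - 16*π^2/L^2) * (∑ k ∈ Finset.Icc 1 n, (FRf w k - FRf w ((k-1 : ℕ) : ℝ))^2)
        ≤ d * (∑ k ∈ Finset.Icc 1 n, (FRf w k - FRf w ((k-1 : ℕ) : ℝ))^2) := by
      calc (4 - 16*π^2/L^2) * (∑ k ∈ Finset.Icc 1 n, (FRf w k - FRf w ((k-1 : ℕ) : ℝ))^2)
          ≤ (4 - 16*π^2/L^2) * GGf w L :=
            mul_le_mul_of_nonneg_left (le_trans hDle hGmono) hT0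
        _ ≤ L/2 + Real.sin (4*w)/(4*w) - 6*w^2 := by rw [hGL]; exact hmn
        _ ≤ ∑ k ∈ Finset.Icc 1 n, Real.sin (w * Real.log k)^2 / k := hNlow'
        _ ≤ d * (∑ k ∈ Finset.Icc 1 n, (FRf w k - FRf w ((k-1 : ℕ) : ℝ))^2) := hkey
    exact le_of_mul_le_mul_right hchain hDpos
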